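/- Let M be a real symmetric positive definite n×n matrix, v ∈ ℝⁿ a nonzero vector, and h, f ∈ ℝⁿ arbitrary vectors. Define the energization coefficient α = −(vᵀ M v)⁻¹ vᵀ (M h − f). Then ⟨v, M(−h − α v) + f⟩ = 0; that is, substituting the energized acceleration ẍ = −h − α v into the energy-derivative expression ⟨v, M ẍ + f⟩ yields zero. -/

import Mathlib

open Matrix

noncomputable section

/-- The energization coefficient `α = −(vᵀ M v)⁻¹ vᵀ (M h − f)`. -/
def energizationCoef {n : ℕ} (M : Matrix (Fin n) (Fin n) ℝ) (v h f : Fin n → ℝ) : ℝ :=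
  -(v ⬝ᵥ M.mulVec v)⁻¹ * (v ⬝ᵥ (M.mulVec h - f))

/-- for `M` symmetric positive definite, `v ≠ 0`, and arbitrary `h, f`,
substituting the energized acceleration `ẍ = −h − α v` into the energy-derivative
expression `⟨v, M ẍ + f⟩` yields zero. -/
theorem energization_coefficient_conserves_energy {n : ℕ}
    (M : Matrix (Fin n) (Fin n) ℝ) (hM : M.PosDef) (v : Fin n → ℝ) (hv : v ≠ 0)
    (h f : Fin n → ℝ) :
    v ⬝ᵥ (M.mulVec (-h - energizationCoef M v h f • v) + f) = 0 := by
  have hpos : 0 < v ⬝ᵥ M.mulVec v := by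
    have := hM.dotProduct_mulVec_pos hv
    simpa using this
  have hne : v ⬝ᵥ M.mulVec v ≠ 0 := ne_of_gt hpos
  simp only [energizationCoef, Matrix.mulVec_sub, Matrix.mulVec_smul, Matrix.mulVec_neg,
    dotProduct_add, dotProduct_sub, dotProduct_neg, dotProduct_smul, smul_eq_mul]
  field_simp
  ring
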